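/- Suppose β ≤ 1, and define f″_ℓ(x) = ζ (d_j xᵢ − dᵢ x_j)^{(aᵢ+a_j)/β} (∏_{k ∉ {i,j}} x_k^{a_k})^{1/β} + z₀, where ζ = λ^{1/β} (u − ℓ)/(u^{1/β} − ℓ^{1/β}). Then f″_ℓ(x) = f(x) for every x ∈ ℝ₊ⁿ such that (x_j = p xᵢ or x_j = q xᵢ) and f(x) ∈ {ℓ, u}. -/

import Mathlib

open Real Finset

/-- For `β ≤ 1`, `f″_ℓ` matches `f` at points of
`(P_{ij} ∪ Q_{ij}) ∩ (C_ℓ ∪ C_u)`. -/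
theorem second_lower_matches (n : ℕ) (hn : 2 ≤ n) (a : Fin n → ℝ)
    (ha : ∀ k, 0 < a k) (ℓ u : ℝ) (hℓ : 0 < ℓ) (hℓu : ℓ < u)
    (i j : Fin n) (hij : i ≠ j) (p q : ℝ) (hp : 0 < p) (hpq : p < q)
    (β di dj lam z₀ ζ : ℝ) (hβ : β = ∑ k, a k) (hβ1 : β ≤ 1)
    (hdi : di = q ^ (-(a j / (a i + a j))) - p ^ (-(a j / (a i + a j))))
    (hdj : dj = q ^ (a i / (a i + a j)) - p ^ (a i / (a i + a j)))
    (hlam : lam = p ^ a j / (dj - di * p) ^ (a i + a j))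
    (hz₀ : z₀ = (u ^ (1 / β) * ℓ - ℓ ^ (1 / β) * u) / (u ^ (1 / β) - ℓ ^ (1 / β)))
    (hζ : ζ = lam ^ (1 / β) * (u - ℓ) / (u ^ (1 / β) - ℓ ^ (1 / β))) :
    ∀ x : Fin n → ℝ, (∀ k, 0 ≤ x k) →
      (x j = p * x i ∨ x j = q * x i) →
      ((∏ k, x k ^ a k) = ℓ ∨ (∏ k, x k ^ a k) = u) →
      ζ * (dj * x i - di * x j) ^ ((a i + a j) / β) *
          (∏ k ∈ ({i, j} : Finset (Fin n))ᶜ, x k ^ a k) ^ (1 / β) + z₀ =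
        ∏ k, x k ^ a k := by
  intro x hx hline hF
  have hq : 0 < q := hp.trans hpq
  have hqp : 0 < q - p := sub_pos.mpr hpq
  have hs : 0 < a i + a j := add_pos (ha i) (ha j)
  have hnpos : 0 < n := by omega
  have hβpos : 0 < β := by
    rw [hβ]
    exact Finset.sum_pos (fun k _ => ha k)
      (Finset.univ_nonempty_iff.mpr (Fin.pos_iff_nonempty.mp hnpos))
  have hFpos : 0 < ∏ k, x k ^ a k := by rcases hF with h | h <;> rw [h] <;> linarith
  have hxpos : ∀ k, 0 < x k := by
    intro k
    rcases (hx k).lt_or_eq with h | h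
    · exact h
    · exfalso
      have : (∏ k, x k ^ a k) = 0 :=
        Finset.prod_eq_zero (mem_univ k) (by rw [← h, Real.zero_rpow (ha k).ne'])
      linarith
  have hxi := hxpos i
  -- key rpow identities
  have hqpow : q ^ (-(a j / (a i + a j))) * q = q ^ (a i / (a i + a j)) := by
    rw [← Real.rpow_add_one hq.ne']
    congr 1
    field_simp
    ring
  have hppow : p ^ (-(a j / (a i + a j))) * p = p ^ (a i / (a i + a j)) := by
    rw [← Real.rpow_add_one hp.ne']
    congr 1
    field_simp
    ring
  have hdp : dj - di * p = q ^ (-(a j / (a i + a j))) * (q - p) := by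
    rw [hdi, hdj]
    linear_combination hppow - hqpow
  have hdq : dj - di * q = p ^ (-(a j / (a i + a j))) * (q - p) := by
    rw [hdi, hdj]
    linear_combination hppow - hqpow
  have hdpp : 0 < dj - di * p := by
    rw [hdp]; exact mul_pos (Real.rpow_pos_of_pos hq _) hqp
  have hdqp : 0 < dj - di * q := by
    rw [hdq]; exact mul_pos (Real.rpow_pos_of_pos hp _) hqp
  have e1 : (dj - di * p) ^ (a i + a j) = q ^ (-(a j)) * (q - p) ^ (a i + a j) := by
    rw [hdp, Real.mul_rpow (Real.rpow_nonneg hq.le _) hqp.le, ← Real.rpow_mul hq.le]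
    congr 2
    field_simp
  have e2 : (dj - di * q) ^ (a i + a j) = p ^ (-(a j)) * (q - p) ^ (a i + a j) := by
    rw [hdq, Real.mul_rpow (Real.rpow_nonneg hp.le _) hqp.le, ← Real.rpow_mul hp.le]
    congr 2
    field_simp
  have hW : (0:ℝ) < (q - p) ^ (a i + a j) := Real.rpow_pos_of_pos hqp _
  have hPa : (0:ℝ) < p ^ a j := Real.rpow_pos_of_pos hp _
  have hQa : (0:ℝ) < q ^ a j := Real.rpow_pos_of_pos hq _
  have hdps : (0:ℝ) < (dj - di * p) ^ (a i + a j) := Real.rpow_pos_of_pos hdpp _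
  have hlampos : 0 < lam := by rw [hlam]; exact div_pos hPa hdps
  have hlam1 : lam * (dj - di * p) ^ (a i + a j) = p ^ a j := by
    rw [hlam]
    field_simp
  have hlam2 : lam * (dj - di * q) ^ (a i + a j) = q ^ a j := by
    rw [hlam, e1, e2, Real.rpow_neg hq.le, Real.rpow_neg hp.le]
    field_simp
  -- product splitting
  have hsplit : (∏ k, x k ^ a k) =
      x i ^ a i * x j ^ a j * ∏ k ∈ ({i, j} : Finset (Fin n))ᶜ, x k ^ a k := by
    rw [← Finset.prod_mul_prod_compl ({i, j} : Finset (Fin n)) (fun k => x k ^ a k),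
      Finset.prod_pair hij]
  have hT : 0 ≤ dj * x i - di * x j := by
    rcases hline with h | h
    · rw [h, show dj * x i - di * (p * x i) = (dj - di * p) * x i by ring]
      exact mul_nonneg hdpp.le hxi.le
    · rw [h, show dj * x i - di * (q * x i) = (dj - di * q) * x i by ring]
      exact mul_nonneg hdqp.le hxi.le
  have hRnonneg : 0 ≤ ∏ k ∈ ({i, j} : Finset (Fin n))ᶜ, x k ^ a k :=
    Finset.prod_nonneg fun k _ => Real.rpow_nonneg (hx k) _
  have hkey : lam * (dj * x i - di * x j) ^ (a i + a j) = x i ^ a i * x j ^ a j := by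
    rcases hline with h | h
    · rw [h, show dj * x i - di * (p * x i) = (dj - di * p) * x i by ring,
        Real.mul_rpow hdpp.le hxi.le, ← mul_assoc, hlam1,
        Real.mul_rpow hp.le hxi.le, Real.rpow_add hxi]
      ring
    · rw [h, show dj * x i - di * (q * x i) = (dj - di * q) * x i by ring,
        Real.mul_rpow hdqp.le hxi.le, ← mul_assoc, hlam2,
        Real.mul_rpow hq.le hxi.le, Real.rpow_add hxi]
      ring
  have hFβ : lam ^ (1 / β) * (dj * x i - di * x j) ^ ((a i + a j) / β) *
      (∏ k ∈ ({i, j} : Finset (Fin n))ᶜ, x k ^ a k) ^ (1 / β) =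
      (∏ k, x k ^ a k) ^ (1 / β) := by
    rw [hsplit, ← hkey,
      show (a i + a j) / β = (a i + a j) * (1 / β) by ring, Real.rpow_mul hT,
      ← Real.mul_rpow hlampos.le (Real.rpow_nonneg hT _),
      ← Real.mul_rpow (mul_nonneg hlampos.le (Real.rpow_nonneg hT _)) hRnonneg]
  have hD : 0 < u ^ (1 / β) - ℓ ^ (1 / β) :=
    sub_pos.mpr (Real.rpow_lt_rpow hℓ.le hℓu (by positivity))
  have hDne : u ^ (1 / β) - ℓ ^ (1 / β) ≠ 0 := hD.ne'
  have hmain : ζ * (dj * x i - di * x j) ^ ((a i + a j) / β) *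
      (∏ k ∈ ({i, j} : Finset (Fin n))ᶜ, x k ^ a k) ^ (1 / β) =
      (u - ℓ) / (u ^ (1 / β) - ℓ ^ (1 / β)) * (∏ k, x k ^ a k) ^ (1 / β) := by
    rw [hζ, ← hFβ]
    ring
  rw [hmain, hz₀]
  rcases hF with h | h <;> rw [h] <;> field_simp <;> ring
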